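/- Fix n ≥ 1 and let ρ be a probability vector on ℤ^d. For ξ : ℤ^d → [0,∞) with |ξ| = Σ_x ξ_x < ∞ and x, y, z ∈ ℤ^d, set J_{x,z}(ξ) = ρ_x + (ξ−δ₀)_{x−z} ρ_z, U_{x,y,z}(ξ) = J_{x,z}(ξ) J_{y,z}(ξ) − ρ_x ρ_y, and W_{x,y,z}(ξ) = (|ξ|−1) ρ_x ρ_y ρ_z. Then E[ Σ_{x,y,z∈ℤ^d} g_n(x−y) ( U_{x,y,z}(K) − 2 W_{x,y,z}(K) ) ] ≥ ( Σ_{x,y∈ℤ^d} g_n(x−y) β_{x,y} − 2(|k| − k_0) ) · Σ_{z∈ℤ^d} ρ_z². -/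

import Mathlib

open MeasureTheory
open scoped BigOperators

/-- `convPow p n` is the `n`-fold convolution power of `p : ℤ^d → ℝ`
(with `convPow p 0 = δ₀`, the Kronecker delta at the origin). -/
noncomputable def convPow {d : ℕ} (p : (Fin d → ℤ) → ℝ) : ℕ → (Fin d → ℤ) → ℝ
  | 0, x => if x = 0 then 1 else 0
  | n + 1, x => ∑' y, convPow p n (x - y) * p y

/-- `gFn p n = δ₀ + Σ_{m=1}^n p_m = Σ_{m=0}^n p_m`. -/
noncomputable def gFn {d : ℕ} (p : (Fin d → ℤ) → ℝ) (n : ℕ) (x : Fin d → ℤ) : ℝ :=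
  ∑ m ∈ Finset.range (n + 1), convPow p m x

section AuxLemmas
variable {d : ℕ}




/-- ℓ¹ norm as a real number -/
private def anorm (x : Fin d → ℤ) : ℝ := ((∑ i, |x i| : ℤ) : ℝ)

private lemma anorm_nonneg (x : Fin d → ℤ) : 0 ≤ anorm x := by
  have : (0:ℤ) ≤ ∑ i, |x i| := Finset.sum_nonneg fun i _ => abs_nonneg _
  unfold anorm
  exact_mod_cast this

private lemma anorm_zero : anorm (0 : Fin d → ℤ) = 0 := by simp [anorm]

private lemma anorm_neg (x : Fin d → ℤ) : anorm (-x) = anorm x := by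
  simp [anorm]

private lemma anorm_sub_le (u v : Fin d → ℤ) : anorm u ≤ anorm (u - v) + anorm v := by
  have h : (∑ i, |u i|) ≤ (∑ i, |u i - v i|) + ∑ i, |v i| := by
    rw [← Finset.sum_add_distrib]
    refine Finset.sum_le_sum fun i _ => ?_
    have := abs_add_le (u i - v i) (v i)
    simpa using this
  have : anorm (u - v) = ((∑ i, |u i - v i| : ℤ) : ℝ) := by simp [anorm]
  rw [this]
  unfold anorm
  exact_mod_cast h

private noncomputable def ball (d : ℕ) (M : ℤ) : Finset (Fin d → ℤ) :=
  Finset.Icc (fun _ => -M) (fun _ => M)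

private lemma mem_ball_of_anorm {M : ℤ} {x : Fin d → ℤ} (h : anorm x ≤ (M : ℝ)) :
    x ∈ ball d M := by
  have h' : (∑ i, |x i| : ℤ) ≤ M := by unfold anorm at h; exact_mod_cast h
  rw [ball, Finset.mem_Icc]
  refine ⟨fun i => ?_, fun i => ?_⟩ <;>
  · have hxi : |x i| ≤ M := le_trans (Finset.single_le_sum (fun j _ => abs_nonneg (x j)) (Finset.mem_univ i)) h'
    have h1 := (abs_le.mp hxi).1
    have h2 := (abs_le.mp hxi).2
    first
      | exact h1
      | exact h2

private lemma neg_mem_ball {M : ℤ} {x : Fin d → ℤ} (h : x ∈ ball d M) : -x ∈ ball d M := by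
  rw [ball, Finset.mem_Icc] at h ⊢
  refine ⟨fun i => ?_, fun i => ?_⟩
  · have h1 : x i ≤ M := h.2 i
    show -M ≤ -x i
    omega
  · have h1 : -M ≤ x i := h.1 i
    show -x i ≤ M
    omega

/-- Generic lemma: tsum over a product where the first factor has finite support. -/
private lemma lemA {A C : Type*} (φ : A → ℝ) (s : Finset A) (hφ : ∀ a ∉ s, φ a = 0)
    (ψ : A → C → ℝ) (hψ : ∀ a, Summable (ψ a)) :
    Summable (fun x : A × C => φ x.1 * ψ x.1 x.2) ∧
      (∑' x : A × C, φ x.1 * ψ x.1 x.2) = ∑ a ∈ s, φ a * ∑' c, ψ a c := by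
  have habs : Summable (fun x : A × C => |φ x.1 * ψ x.1 x.2|) := by
    rw [summable_prod_of_nonneg (fun x => abs_nonneg _)]
    refine ⟨fun a => ?_, ?_⟩
    · simpa [abs_mul] using ((hψ a).abs.mul_left |φ a|)
    · refine summable_of_ne_finset_zero (s := s) fun a ha => ?_
      simp [hφ a ha]
  have hsum : Summable (fun x : A × C => φ x.1 * ψ x.1 x.2) := summable_abs_iff.mp habs
  refine ⟨hsum, ?_⟩
  rw [hsum.tsum_prod, tsum_eq_sum (s := s) (fun a ha => by simp [hφ a ha])]
  refine Finset.sum_congr rfl fun a _ => ?_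
  rw [← tsum_mul_left]

variable {p : (Fin d → ℤ) → ℝ}

private lemma convPow_nonneg (hp : ∀ x, 0 ≤ p x) : ∀ m x, 0 ≤ convPow p m x := by
  intro m
  induction m with
  | zero => intro x; simp only [convPow]; positivity
  | succ m ih =>
    intro x
    simp only [convPow]
    exact tsum_nonneg fun y => mul_nonneg (ih _) (hp y)

private lemma convPow_supp {c : ℝ} (hc : 0 ≤ c) (hs : ∀ x, p x ≠ 0 → anorm x ≤ c) :
    ∀ m x, convPow p m x ≠ 0 → anorm x ≤ m * c := by
  intro m
  induction m with
  | zero =>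
    intro x hx
    simp only [convPow, ne_eq, ite_eq_right_iff, not_forall] at hx
    simp [hx.1, anorm_zero]
  | succ m ih =>
    intro x hx
    by_contra hbig
    push_neg at hbig
    apply hx
    simp only [convPow]
    have : ∀ y, convPow p m (x - y) * p y = 0 := by
      intro y
      by_contra hy
      have h1 : convPow p m (x - y) ≠ 0 := fun h => hy (by simp [h])
      have h2 : p y ≠ 0 := fun h => hy (by simp [h])
      have := anorm_sub_le x y
      have := ih _ h1
      have := hs _ h2
      push_cast at hbig
      nlinarith
    simp only [this, tsum_zero]

private lemma convPow_neg (hsym : ∀ x, p (-x) = p x) : ∀ m (x : Fin d → ℤ),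
    convPow p m (-x) = convPow p m x := by
  intro m
  induction m with
  | zero => intro x; simp only [convPow, neg_eq_zero]
  | succ m ih =>
    intro x
    simp only [convPow]
    rw [← (Equiv.neg (Fin d → ℤ)).tsum_eq (fun y => convPow p m (-x - y) * p y)]
    refine tsum_congr fun y => ?_
    show convPow p m (-x - (-y)) * p (-y) = convPow p m (x - y) * p y
    rw [show -x - -y = -(x - y) from by abel, ih (x - y), hsym y]

private lemma gFn_neg (hsym : ∀ x, p (-x) = p x) (n : ℕ) (x : Fin d → ℤ) :
    gFn p n (-x) = gFn p n x := by
  unfold gFn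
  exact Finset.sum_congr rfl fun m _ => convPow_neg hsym m x


variable {p : (Fin d → ℤ) → ℝ}

private lemma conv_identity {s : Finset (Fin d → ℤ)} (hps : ∀ v, p v ≠ 0 → v ∈ s)
    (n : ℕ) (u : Fin d → ℤ) :
    ∑' v, gFn p n (u - v) * p v
      = gFn p n u - (if u = 0 then 1 else 0) + convPow p (n + 1) u := by
  have hsummable : ∀ m : ℕ, Summable (fun v => convPow p m (u - v) * p v) := by
    intro m
    refine summable_of_ne_finset_zero (s := s) fun v hv => ?_
    rcases eq_or_ne (p v) 0 with hz | hz
    · simp [hz]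
    · exact absurd (hps v hz) hv
  have h1 : ∀ v, gFn p n (u - v) * p v
      = ∑ m ∈ Finset.range (n+1), convPow p m (u - v) * p v := by
    intro v; rw [gFn, Finset.sum_mul]
  calc ∑' v, gFn p n (u - v) * p v
      = ∑ m ∈ Finset.range (n+1), ∑' v, convPow p m (u - v) * p v := by
        rw [tsum_congr h1, Summable.tsum_finsetSum (fun m _ => hsummable m)]
    _ = ∑ m ∈ Finset.range (n+1), convPow p (m+1) u := by
        exact Finset.sum_congr rfl fun m _ => rfl
    _ = gFn p n u - (if u = 0 then 1 else 0) + convPow p (n+1) u := by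
        have h2 : ∑ m ∈ Finset.range (n+2), convPow p m u
            = ∑ m ∈ Finset.range (n+1), convPow p (m+1) u + convPow p 0 u :=
          Finset.sum_range_succ' _ _
        have h3 : ∑ m ∈ Finset.range (n+2), convPow p m u
            = gFn p n u + convPow p (n+1) u := by
          rw [gFn]; exact Finset.sum_range_succ _ _
        have h4 : convPow p 0 u = (if u = 0 then 1 else 0) := rfl
        rw [← h4]
        linarith


private def eShear (d : ℕ) : ((Fin d → ℤ) × (Fin d → ℤ)) ≃ ((Fin d → ℤ) × (Fin d → ℤ)) where
  toFun q := (q.1 - q.2, q.2)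
  invFun q := (q.1 + q.2, q.2)
  left_inv q := by simp
  right_inv q := by simp

private def eTriple (d : ℕ) :
    (((Fin d → ℤ) × (Fin d → ℤ)) × (Fin d → ℤ)) ≃ ((Fin d → ℤ) × (Fin d → ℤ) × (Fin d → ℤ)) where
  toFun x := (x.1.1 + x.2, x.1.2 + x.2, x.2)
  invFun t := ((t.1 - t.2.2, t.2.1 - t.2.2), t.2.2)
  left_inv x := by simp
  right_inv t := by simp

private def eW (d : ℕ) :
    ((Fin d → ℤ) × ((Fin d → ℤ) × (Fin d → ℤ))) ≃ (((Fin d → ℤ) × (Fin d → ℤ)) × (Fin d → ℤ)) where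
  toFun y := ((y.1 + y.2.1, y.2.1), y.2.2)
  invFun x := (x.1.1 - x.1.2, x.1.2, x.2)
  left_inv y := by simp
  right_inv x := by simp


set_option maxHeartbeats 1000000 in
private lemma pointwise (g KK ρ : (Fin d → ℤ) → ℝ) (s : Finset (Fin d → ℤ))
    (hρ0 : ∀ x, 0 ≤ ρ x) (hρ1 : HasSum ρ 1)
    (h0s : (0 : Fin d → ℤ) ∈ s)
    (hgsym : ∀ x, g (-x) = g x)
    (hgs : ∀ w, g w ≠ 0 → w ∈ s)
    (hKs : ∀ x, KK x ≠ 0 → x ∈ s)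
    (hgB : ∀ u v, g (u - v) ≠ 0 → (KK v - (if v = 0 then 1 else 0)) ≠ 0 → u ∈ s)
    (hgB' : ∀ u v, g (u - v) ≠ 0 → (KK u - (if u = 0 then 1 else 0)) ≠ 0 → v ∈ s) :
    (∑' t : (Fin d → ℤ) × (Fin d → ℤ) × (Fin d → ℤ),
          g (t.1 - t.2.1) *
            (((ρ t.1 + (KK (t.1 - t.2.2) - (if t.1 - t.2.2 = 0 then 1 else 0)) * ρ t.2.2) *
                (ρ t.2.1 + (KK (t.2.1 - t.2.2) - (if t.2.1 - t.2.2 = 0 then 1 else 0)) * ρ t.2.2) -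
                ρ t.1 * ρ t.2.1) -
              2 * (((∑' u, KK u) - 1) * ρ t.1 * ρ t.2.1 * ρ t.2.2)))
    = 2 * (∑ a ∈ s ×ˢ s,
          (g (a.1 - a.2) * (KK a.2 - (if a.2 = 0 then 1 else 0))) * ∑' c, ρ (a.1 + c) * ρ c)
      + (∑ a ∈ s ×ˢ s,
          (g (a.1 - a.2) * ((KK a.1 - (if a.1 = 0 then 1 else 0)) * (KK a.2 - (if a.2 = 0 then 1 else 0))))
            * ∑' (c : Fin d → ℤ), ρ c * ρ c)
      - (∑ w ∈ s, ((2 * ((∑ x ∈ s, KK x) - 1)) * g w) * ∑' c, ρ (w + c) * ρ c) := by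
  classical
  have hρsum : Summable ρ := hρ1.summable
  have hρtsum : ∑' z, ρ z = 1 := hρ1.tsum_eq
  have hρle : ∀ x, ρ x ≤ 1 := fun x => le_hasSum hρ1 x (fun y _ => hρ0 y)
  have hBmem : ∀ x : Fin d → ℤ, (KK x - (if x = 0 then 1 else 0)) ≠ 0 → x ∈ s := by
    intro x hx
    rcases eq_or_ne (KK x) 0 with hz | hz
    · rcases eq_or_ne x 0 with h0 | h0
      · rwa [h0]
      · exfalso; apply hx; simp [hz, h0]
    · exact hKs x hz
  have hKtsum : (∑' u, KK u) = ∑ x ∈ s, KK x :=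
    tsum_eq_sum (fun x hx => by_contra fun hne => hx (hKs x hne))
  -- summability of h-type sums
  have hsum_h : ∀ w : Fin d → ℤ, Summable fun a => ρ (w + a) * ρ a := fun w =>
    Summable.of_nonneg_of_le (fun a => mul_nonneg (hρ0 _) (hρ0 _))
      (fun a => mul_le_of_le_one_left (hρ0 a) (hρle _)) hρsum
  -- lemA applications
  have S1 := lemA (fun a : (Fin d → ℤ) × (Fin d → ℤ) =>
      g (a.1 - a.2) * (KK a.2 - (if a.2 = 0 then 1 else 0))) (s ×ˢ s)
    (by
      rintro ⟨u, v⟩ ha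
      rw [Finset.mem_product] at ha
      by_cases hBv : (KK v - (if v = 0 then 1 else 0)) = 0
      · simp [hBv]
      by_cases hgv : g (u - v) = 0
      · simp [hgv]
      exact absurd ⟨hgB u v hgv hBv, hBmem v hBv⟩ ha)
    (fun a => fun z => ρ (a.1 + z) * ρ z) (fun a => hsum_h a.1)
  have S2 := lemA (fun a : (Fin d → ℤ) × (Fin d → ℤ) =>
      g (a.1 - a.2) * (KK a.1 - (if a.1 = 0 then 1 else 0))) (s ×ˢ s)
    (by
      rintro ⟨u, v⟩ ha
      rw [Finset.mem_product] at ha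
      by_cases hBu : (KK u - (if u = 0 then 1 else 0)) = 0
      · simp [hBu]
      by_cases hgv : g (u - v) = 0
      · simp [hgv]
      exact absurd ⟨hBmem u hBu, hgB' u v hgv hBu⟩ ha)
    (fun a => fun z => ρ (a.2 + z) * ρ z) (fun a => hsum_h a.2)
  have S3 := lemA (fun a : (Fin d → ℤ) × (Fin d → ℤ) =>
      g (a.1 - a.2) * ((KK a.1 - (if a.1 = 0 then 1 else 0)) * (KK a.2 - (if a.2 = 0 then 1 else 0)))) (s ×ˢ s)
    (by
      rintro ⟨u, v⟩ ha
      rw [Finset.mem_product] at ha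
      by_cases hBu : (KK u - (if u = 0 then 1 else 0)) = 0
      · simp [hBu]
      by_cases hBv : (KK v - (if v = 0 then 1 else 0)) = 0
      · simp [hBv]
      exact absurd ⟨hBmem u hBu, hBmem v hBv⟩ ha)
    (fun _ => fun z => ρ z * ρ z)
    (fun a => Summable.of_nonneg_of_le (fun z => mul_nonneg (hρ0 _) (hρ0 _))
      (fun z => mul_le_of_le_one_left (hρ0 z) (hρle _)) hρsum)
  -- the F4 piece
  have base : Summable (fun q : (Fin d → ℤ) × (Fin d → ℤ) => ρ q.1 * ρ q.2) :=
    hρsum.mul_of_nonneg hρsum (fun x => hρ0 x) (fun x => hρ0 x)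
  have base2 : Summable (fun q : (Fin d → ℤ) × (Fin d → ℤ) => ρ (q.1 + q.2) * ρ q.2) := by
    apply (Equiv.summable_iff (eShear d)
      (f := fun q : (Fin d → ℤ) × (Fin d → ℤ) => ρ (q.1 + q.2) * ρ q.2)).1
    have heq : ((fun q : (Fin d → ℤ) × (Fin d → ℤ) => ρ (q.1 + q.2) * ρ q.2) ∘ ⇑(eShear d))
        = fun q : (Fin d → ℤ) × (Fin d → ℤ) => ρ q.1 * ρ q.2 := by
      funext q
      show ρ (q.1 - q.2 + q.2) * ρ q.2 = ρ q.1 * ρ q.2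
      rw [show q.1 - q.2 + q.2 = q.1 from by abel]
    rw [heq]
    exact base
  have hψ4 : ∀ w : Fin d → ℤ, Summable (fun vz : (Fin d → ℤ) × (Fin d → ℤ) =>
      ρ (w + vz.1 + vz.2) * (ρ (vz.1 + vz.2) * ρ vz.2)) := by
    intro w
    refine Summable.of_nonneg_of_le
      (fun vz => mul_nonneg (hρ0 _) (mul_nonneg (hρ0 _) (hρ0 _)))
      (fun vz => mul_le_of_le_one_left (mul_nonneg (hρ0 _) (hρ0 _)) (hρle _)) base2
  have hψ4val : ∀ w : Fin d → ℤ, (∑' vz : (Fin d → ℤ) × (Fin d → ℤ),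
      ρ (w + vz.1 + vz.2) * (ρ (vz.1 + vz.2) * ρ vz.2)) = ∑' c, ρ (w + c) * ρ c := by
    intro w
    have hs6 : Summable (fun q : (Fin d → ℤ) × (Fin d → ℤ) => (ρ (w + q.1) * ρ q.1) * ρ q.2) :=
      (hsum_h w).mul_of_nonneg hρsum (fun a => mul_nonneg (hρ0 _) (hρ0 _)) (fun x => hρ0 x)
    have step1 := (Equiv.tsum_eq (eShear d) (fun vz : (Fin d → ℤ) × (Fin d → ℤ) =>
      ρ (w + vz.1 + vz.2) * (ρ (vz.1 + vz.2) * ρ vz.2))).symm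
    refine step1.trans ?_
    have hcong : ∀ q : (Fin d → ℤ) × (Fin d → ℤ),
        ρ (w + (q.1 - q.2) + q.2) * (ρ ((q.1 - q.2) + q.2) * ρ q.2)
          = (ρ (w + q.1) * ρ q.1) * ρ q.2 := by
      intro q
      rw [show w + (q.1 - q.2) + q.2 = w + q.1 from by abel,
        show q.1 - q.2 + q.2 = q.1 from by abel, mul_assoc]
    refine (tsum_congr hcong).trans ?_
    rw [hs6.tsum_prod]
    refine tsum_congr fun a => ?_
    show ∑' (c : Fin d → ℤ), (ρ (w + a) * ρ a) * ρ c = ρ (w + a) * ρ a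
    rw [tsum_mul_left, hρtsum, mul_one]
  have S4 := lemA (fun w : Fin d → ℤ => (2 * ((∑' u, KK u) - 1)) * g w) s
    (by
      intro w hw
      by_cases hgw : g w = 0
      · simp [hgw]
      · exact absurd (hgs w hgw) hw)
    (fun w => fun vz : (Fin d → ℤ) × (Fin d → ℤ) =>
      ρ (w + vz.1 + vz.2) * (ρ (vz.1 + vz.2) * ρ vz.2)) (fun w => hψ4 w)
  -- pointwise identity after reparametrization
  have hpt : ∀ x : ((Fin d → ℤ) × (Fin d → ℤ)) × (Fin d → ℤ),
      g ((eTriple d x).1 - (eTriple d x).2.1) *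
            (((ρ (eTriple d x).1 + (KK ((eTriple d x).1 - (eTriple d x).2.2) -
                  (if (eTriple d x).1 - (eTriple d x).2.2 = 0 then 1 else 0)) * ρ (eTriple d x).2.2) *
                (ρ (eTriple d x).2.1 + (KK ((eTriple d x).2.1 - (eTriple d x).2.2) -
                  (if (eTriple d x).2.1 - (eTriple d x).2.2 = 0 then 1 else 0)) * ρ (eTriple d x).2.2) -
                ρ (eTriple d x).1 * ρ (eTriple d x).2.1) -
              2 * (((∑' u, KK u) - 1) * ρ (eTriple d x).1 * ρ (eTriple d x).2.1 * ρ (eTriple d x).2.2))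
      = (g (x.1.1 - x.1.2) * (KK x.1.2 - (if x.1.2 = 0 then 1 else 0))) * (ρ (x.1.1 + x.2) * ρ x.2)
        + (g (x.1.1 - x.1.2) * (KK x.1.1 - (if x.1.1 = 0 then 1 else 0))) * (ρ (x.1.2 + x.2) * ρ x.2)
        + (g (x.1.1 - x.1.2) * ((KK x.1.1 - (if x.1.1 = 0 then 1 else 0)) *
            (KK x.1.2 - (if x.1.2 = 0 then 1 else 0)))) * (ρ x.2 * ρ x.2)
        - ((2 * ((∑' u, KK u) - 1)) * g (x.1.1 - x.1.2)) *
            (ρ (x.1.1 + x.2) * (ρ (x.1.2 + x.2) * ρ x.2)) := by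
    rintro ⟨⟨u, v⟩, z⟩
    dsimp only [eTriple, Equiv.coe_fn_mk]
    simp only [show u + z - (v + z) = u - v from by abel, show u + z - z = u from by abel,
      show v + z - z = v from by abel]
    ring
  -- the F4 transfer
  have hW : ∀ y : (Fin d → ℤ) × ((Fin d → ℤ) × (Fin d → ℤ)),
      ((2 * ((∑' u, KK u) - 1)) * g ((eW d y).1.1 - (eW d y).1.2)) *
          (ρ ((eW d y).1.1 + (eW d y).2) * (ρ ((eW d y).1.2 + (eW d y).2) * ρ (eW d y).2))
      = ((2 * ((∑' u, KK u) - 1)) * g y.1) *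
          (ρ (y.1 + y.2.1 + y.2.2) * (ρ (y.2.1 + y.2.2) * ρ y.2.2)) := by
    rintro ⟨w, v, z⟩
    dsimp only [eW, Equiv.coe_fn_mk]
    rw [show w + v - v = w from by abel]
  have hF4sum : Summable (fun x : ((Fin d → ℤ) × (Fin d → ℤ)) × (Fin d → ℤ) =>
      ((2 * ((∑' u, KK u) - 1)) * g (x.1.1 - x.1.2)) *
        (ρ (x.1.1 + x.2) * (ρ (x.1.2 + x.2) * ρ x.2))) := by
    apply (Equiv.summable_iff (eW d)).1
    have heqW : ((fun x : ((Fin d → ℤ) × (Fin d → ℤ)) × (Fin d → ℤ) =>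
        ((2 * ((∑' u, KK u) - 1)) * g (x.1.1 - x.1.2)) *
          (ρ (x.1.1 + x.2) * (ρ (x.1.2 + x.2) * ρ x.2))) ∘ ⇑(eW d))
        = fun y : (Fin d → ℤ) × ((Fin d → ℤ) × (Fin d → ℤ)) =>
          ((2 * ((∑' u, KK u) - 1)) * g y.1) *
            (ρ (y.1 + y.2.1 + y.2.2) * (ρ (y.2.1 + y.2.2) * ρ y.2.2)) := funext fun y => hW y
    rw [heqW]
    exact S4.1
  have hT4 : (∑' x : ((Fin d → ℤ) × (Fin d → ℤ)) × (Fin d → ℤ),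
      ((2 * ((∑' u, KK u) - 1)) * g (x.1.1 - x.1.2)) *
        (ρ (x.1.1 + x.2) * (ρ (x.1.2 + x.2) * ρ x.2)))
      = ∑ w ∈ s, ((2 * ((∑ x ∈ s, KK x) - 1)) * g w) * ∑' c, ρ (w + c) * ρ c := by
    refine Eq.trans (Equiv.tsum_eq (eW d) _).symm ?_
    refine Eq.trans (tsum_congr hW) ?_
    refine Eq.trans S4.2 ?_
    refine Finset.sum_congr rfl fun w _ => ?_
    rw [hψ4val w, hKtsum]
  -- beta-reduced restatements of the lemA values
  have T1v : (∑' x : ((Fin d → ℤ) × (Fin d → ℤ)) × (Fin d → ℤ),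
      (g (x.1.1 - x.1.2) * (KK x.1.2 - (if x.1.2 = 0 then 1 else 0))) * (ρ (x.1.1 + x.2) * ρ x.2))
      = ∑ a ∈ s ×ˢ s, (g (a.1 - a.2) * (KK a.2 - (if a.2 = 0 then 1 else 0)))
          * ∑' c, ρ (a.1 + c) * ρ c := S1.2
  have T2v : (∑' x : ((Fin d → ℤ) × (Fin d → ℤ)) × (Fin d → ℤ),
      (g (x.1.1 - x.1.2) * (KK x.1.1 - (if x.1.1 = 0 then 1 else 0))) * (ρ (x.1.2 + x.2) * ρ x.2))
      = ∑ a ∈ s ×ˢ s, (g (a.1 - a.2) * (KK a.1 - (if a.1 = 0 then 1 else 0)))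
          * ∑' c, ρ (a.2 + c) * ρ c := S2.2
  have T3v : (∑' x : ((Fin d → ℤ) × (Fin d → ℤ)) × (Fin d → ℤ),
      (g (x.1.1 - x.1.2) * ((KK x.1.1 - (if x.1.1 = 0 then 1 else 0)) *
        (KK x.1.2 - (if x.1.2 = 0 then 1 else 0)))) * (ρ x.2 * ρ x.2))
      = ∑ a ∈ s ×ˢ s, (g (a.1 - a.2) * ((KK a.1 - (if a.1 = 0 then 1 else 0)) *
          (KK a.2 - (if a.2 = 0 then 1 else 0))))
          * ∑' (c : Fin d → ℤ), ρ c * ρ c := S3.2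
  -- swap for the second sum
  have hswap : (∑ a ∈ s ×ˢ s, (g (a.1 - a.2) * (KK a.1 - (if a.1 = 0 then 1 else 0)))
        * ∑' c, ρ (a.2 + c) * ρ c)
      = ∑ a ∈ s ×ˢ s, (g (a.1 - a.2) * (KK a.2 - (if a.2 = 0 then 1 else 0)))
          * ∑' c, ρ (a.1 + c) * ρ c := by
    refine Finset.sum_nbij' (fun a => (a.2, a.1)) (fun a => (a.2, a.1)) ?_ ?_ ?_ ?_ ?_
    · intro a ha; rw [Finset.mem_product] at ha ⊢; exact ⟨ha.2, ha.1⟩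
    · intro a ha; rw [Finset.mem_product] at ha ⊢; exact ⟨ha.2, ha.1⟩
    · intro a _; rfl
    · intro a _; rfl
    · intro a _
      show (g (a.1 - a.2) * (KK a.1 - (if a.1 = 0 then 1 else 0))) * (∑' c, ρ (a.2 + c) * ρ c)
        = (g (a.2 - a.1) * (KK a.1 - (if a.1 = 0 then 1 else 0))) * ∑' c, ρ (a.2 + c) * ρ c
      rw [show a.2 - a.1 = -(a.1 - a.2) from by abel, hgsym]
  -- assemble
  have h12 : Summable (fun x : ((Fin d → ℤ) × (Fin d → ℤ)) × (Fin d → ℤ) =>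
      (g (x.1.1 - x.1.2) * (KK x.1.2 - (if x.1.2 = 0 then 1 else 0))) * (ρ (x.1.1 + x.2) * ρ x.2)
      + (g (x.1.1 - x.1.2) * (KK x.1.1 - (if x.1.1 = 0 then 1 else 0))) * (ρ (x.1.2 + x.2) * ρ x.2)) :=
    S1.1.add S2.1
  have h123 : Summable (fun x : ((Fin d → ℤ) × (Fin d → ℤ)) × (Fin d → ℤ) =>
      ((g (x.1.1 - x.1.2) * (KK x.1.2 - (if x.1.2 = 0 then 1 else 0))) * (ρ (x.1.1 + x.2) * ρ x.2)
      + (g (x.1.1 - x.1.2) * (KK x.1.1 - (if x.1.1 = 0 then 1 else 0))) * (ρ (x.1.2 + x.2) * ρ x.2))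
      + (g (x.1.1 - x.1.2) * ((KK x.1.1 - (if x.1.1 = 0 then 1 else 0)) *
          (KK x.1.2 - (if x.1.2 = 0 then 1 else 0)))) * (ρ x.2 * ρ x.2)) :=
    h12.add S3.1
  refine Eq.trans (Equiv.tsum_eq (eTriple d) _).symm ?_
  refine Eq.trans (tsum_congr hpt) ?_
  have hsub := Summable.tsum_sub h123 hF4sum
  refine Eq.trans hsub ?_
  have hadd1 := Summable.tsum_add h12 S3.1
  have hadd2 := Summable.tsum_add S1.1 S2.1
  rw [hadd1, hadd2, T1v, T2v, T3v, hT4, hswap]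
  ring

end AuxLemmas

set_option maxHeartbeats 2000000 in
theorem stmt11 {d : ℕ} {Ω : Type*} [MeasurableSpace Ω] (P : Measure Ω)
    [IsProbabilityMeasure P]
    (K : Ω → (Fin d → ℤ) → ℝ) (b r : ℝ)
    (hKmeas : ∀ x, Measurable fun ω => K ω x)
    (hKbd : ∀ᵐ ω ∂P, ∀ x, 0 ≤ K ω x ∧
      K ω x ≤ b * (if ((∑ i, |x i| : ℤ) : ℝ) ≤ r then 1 else 0))
    (k : (Fin d → ℤ) → ℝ) (hk : ∀ x, k x = ∫ ω, K ω x ∂P)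
    (β : (Fin d → ℤ) → (Fin d → ℤ) → ℝ)
    (hβ : ∀ x y, β x y = ∫ ω, (K ω x - (if x = 0 then 1 else 0)) *
        (K ω y - (if y = 0 then 1 else 0)) ∂P)
    (hbasis : ∃ v : Fin d → (Fin d → ℤ), (∀ i, k (v i) ≠ 0) ∧
      LinearIndependent ℝ fun i => fun j => ((v i j : ℝ)))
    (p : (Fin d → ℤ) → ℝ)
    (hp : ∀ x, p x = if x = 0 then 0
        else (k x + k (-x)) / (2 * ((∑' y, k y) - k 0)))
    (n : ℕ) (hn : 1 ≤ n)
    (ρ : (Fin d → ℤ) → ℝ) (hρ0 : ∀ x, 0 ≤ ρ x) (hρ1 : HasSum ρ 1) :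
    (∑' q : (Fin d → ℤ) × (Fin d → ℤ), gFn p n (q.1 - q.2) * β q.1 q.2 -
        2 * ((∑' y, k y) - k 0)) * ∑' z, (ρ z) ^ 2 ≤
      ∫ ω, ∑' t : (Fin d → ℤ) × (Fin d → ℤ) × (Fin d → ℤ),
          gFn p n (t.1 - t.2.1) *
            (((ρ t.1 + (K ω (t.1 - t.2.2) - (if t.1 - t.2.2 = 0 then 1 else 0)) * ρ t.2.2) *
                (ρ t.2.1 + (K ω (t.2.1 - t.2.2) - (if t.2.1 - t.2.2 = 0 then 1 else 0)) * ρ t.2.2) -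
                ρ t.1 * ρ t.2.1) -
              2 * (((∑' u, K ω u) - 1) * ρ t.1 * ρ t.2.1 * ρ t.2.2)) ∂P := by
  classical
  -- ρ facts
  have hρsum : Summable ρ := hρ1.summable
  have hρle : ∀ x, ρ x ≤ 1 := fun x => le_hasSum hρ1 x fun y _ => hρ0 y
  have h_nonneg : ∀ w : Fin d → ℤ, 0 ≤ ∑' a, ρ (w + a) * ρ a := fun w =>
    tsum_nonneg fun a => mul_nonneg (hρ0 _) (hρ0 _)
  have h_symm : ∀ w : Fin d → ℤ, (∑' a, ρ (-w + a) * ρ a) = ∑' a, ρ (w + a) * ρ a := by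
    intro w
    refine Eq.trans (Equiv.tsum_eq (Equiv.addLeft w) (fun a => ρ (-w + a) * ρ a)).symm ?_
    refine tsum_congr fun a => ?_
    show ρ (-w + (w + a)) * ρ (w + a) = ρ (w + a) * ρ a
    rw [show -w + (w + a) = a from by abel, mul_comm]
  have hc' : (∑' z, (ρ z) ^ 2) = ∑' (z : Fin d → ℤ), ρ z * ρ z := tsum_congr fun z => sq (ρ z)
  have hh0 : (∑' a, ρ ((0 : Fin d → ℤ) + a) * ρ a) = ∑' (z : Fin d → ℤ), ρ z * ρ z :=
    tsum_congr fun a => by rw [zero_add]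
  -- radius and finset
  have hmax0 : (0:ℝ) ≤ max r 0 := le_max_right r 0
  set ν : ℝ := ((n : ℝ) + 1) * max r 0 with hν
  have hν0 : 0 ≤ ν := by positivity
  have hrν : max r 0 ≤ ν := by
    rw [hν]; nlinarith [Nat.cast_nonneg (α := ℝ) n]
  have hnν : (n : ℝ) * max r 0 + max r 0 ≤ ν := by rw [hν]; ring_nf; rfl
  set s : Finset (Fin d → ℤ) := ball d ⌈ν⌉ with hsdef
  have hmem : ∀ x : Fin d → ℤ, anorm x ≤ ν → x ∈ s := fun x hx =>
    mem_ball_of_anorm (le_trans hx (Int.le_ceil ν))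
  have h0s : (0 : Fin d → ℤ) ∈ s := hmem 0 (by rw [anorm_zero]; exact hν0)
  have hrmem : ∀ x : Fin d → ℤ, anorm x ≤ r → x ∈ s := fun x hx =>
    hmem x (le_trans hx (le_trans (le_max_left r 0) hrν))
  -- K bounds
  have hKbd' : ∀ᵐ ω ∂P, ∀ x : Fin d → ℤ,
      0 ≤ K ω x ∧ K ω x ≤ max b 0 ∧ (¬ anorm x ≤ r → K ω x = 0) := by
    filter_upwards [hKbd] with ω hω
    intro x
    obtain ⟨h1, h2⟩ := hω x
    by_cases hcnd : ((∑ i, |x i| : ℤ) : ℝ) ≤ r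
    · rw [if_pos hcnd, mul_one] at h2
      exact ⟨h1, le_trans h2 (le_max_left b 0), fun hcon => absurd hcnd hcon⟩
    · rw [if_neg hcnd, mul_zero] at h2
      have hx0 : K ω x = 0 := le_antisymm h2 h1
      exact ⟨h1, by rw [hx0]; exact le_max_right b 0, fun _ => hx0⟩
  -- k facts
  have hKint : ∀ x, Integrable (fun ω => K ω x) P := by
    intro x
    refine Integrable.mono' (integrable_const (max b 0)) (hKmeas x).aestronglyMeasurable ?_
    filter_upwards [hKbd'] with ω hω
    rw [Real.norm_eq_abs, abs_of_nonneg (hω x).1]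
    exact (hω x).2.1
  have hk0 : ∀ x, 0 ≤ k x := fun x => by
    rw [hk x]
    exact integral_nonneg_of_ae (by filter_upwards [hKbd'] with ω hω; exact (hω x).1)
  have hksupp : ∀ x, ¬ anorm x ≤ r → k x = 0 := by
    intro x hx
    rw [hk x,
      integral_congr_ae (g := fun _ => (0:ℝ))
        (by filter_upwards [hKbd'] with ω hω; exact (hω x).2.2 hx)]
    simp
  have hks : ∀ x, x ∉ s → k x = 0 := fun x hx =>
    hksupp x fun hr' => hx (hrmem x hr')
  have htsumk : (∑' y, k y) = ∑ x ∈ s, k x := tsum_eq_sum fun x hx => hks x hx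
  have hdk0 : 0 ≤ (∑ x ∈ s, k x) - k 0 :=
    sub_nonneg.2 (Finset.single_le_sum (fun i _ => hk0 i) h0s)
  -- p facts
  have hp_nonneg : ∀ x, 0 ≤ p x := by
    intro x
    rw [hp x]
    split
    · exact le_refl 0
    · refine div_nonneg (add_nonneg (hk0 _) (hk0 _)) ?_
      rw [htsumk]; linarith
  have hp_supp : ∀ x, p x ≠ 0 → anorm x ≤ max r 0 := by
    intro x hx
    by_contra hbig
    apply hx
    rw [hp x]
    rcases eq_or_ne x 0 with h0 | h0
    · rw [if_pos h0]
    · rw [if_neg h0]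
      have h1 : k x = 0 := hksupp x fun hl => hbig (le_trans hl (le_max_left r 0))
      have h2 : k (-x) = 0 := hksupp (-x) fun hl =>
        hbig (by rw [anorm_neg] at hl; exact le_trans hl (le_max_left r 0))
      rw [h1, h2]; simp
  have hp_symm : ∀ x, p (-x) = p x := by
    intro x
    rw [hp x, hp (-x)]
    rcases eq_or_ne x 0 with h0 | h0
    · simp [h0]
    · rw [if_neg h0, if_neg (by simpa using h0), neg_neg, add_comm]
  have hg_symm : ∀ x, gFn p n (-x) = gFn p n x := gFn_neg hp_symm n
  have hg_supp : ∀ x, gFn p n x ≠ 0 → anorm x ≤ (n:ℝ) * max r 0 := by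
    intro x hx
    by_contra hbig
    apply hx
    rw [gFn]
    refine Finset.sum_eq_zero fun m hm => ?_
    by_contra hmz
    have hsupp := convPow_supp hmax0 hp_supp m x hmz
    have hmn : (m:ℝ) ≤ (n:ℝ) := by
      exact_mod_cast Nat.le_of_lt_succ (Finset.mem_range.1 hm)
    nlinarith
  have hgs : ∀ w, gFn p n w ≠ 0 → w ∈ s := fun w hw =>
    hmem w (le_trans (hg_supp w hw) (by nlinarith [anorm_nonneg w]))
  have hpscl : ∀ v, p v ≠ 0 → v ∈ s := fun v hv => hmem v (le_trans (hp_supp v hv) hrν)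
  -- pointwise identity, a.e.
  have hae : (fun ω => ∑' t : (Fin d → ℤ) × (Fin d → ℤ) × (Fin d → ℤ),
        gFn p n (t.1 - t.2.1) *
          (((ρ t.1 + (K ω (t.1 - t.2.2) - (if t.1 - t.2.2 = 0 then 1 else 0)) * ρ t.2.2) *
              (ρ t.2.1 + (K ω (t.2.1 - t.2.2) - (if t.2.1 - t.2.2 = 0 then 1 else 0)) * ρ t.2.2) -
              ρ t.1 * ρ t.2.1) -
            2 * (((∑' u, K ω u) - 1) * ρ t.1 * ρ t.2.1 * ρ t.2.2)))
      =ᵐ[P] (fun ω =>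
        2 * (∑ a ∈ s ×ˢ s,
            (gFn p n (a.1 - a.2) * (K ω a.2 - (if a.2 = 0 then 1 else 0))) * ∑' c, ρ (a.1 + c) * ρ c)
        + (∑ a ∈ s ×ˢ s,
            (gFn p n (a.1 - a.2) * ((K ω a.1 - (if a.1 = 0 then 1 else 0)) *
              (K ω a.2 - (if a.2 = 0 then 1 else 0)))) * ∑' (c : Fin d → ℤ), ρ c * ρ c)
        - (∑ w ∈ s, ((2 * ((∑ x ∈ s, K ω x) - 1)) * gFn p n w) * ∑' c, ρ (w + c) * ρ c)) := by
    filter_upwards [hKbd'] with ω hω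
    have hKz : ∀ x, K ω x ≠ 0 → x ∈ s := by
      intro x hne
      by_contra hxs
      exact hne ((hω x).2.2 fun hr' => hxs (hrmem x hr'))
    have hBn : ∀ x : Fin d → ℤ, (K ω x - (if x = 0 then 1 else 0)) ≠ 0 → anorm x ≤ max r 0 := by
      intro x hne
      rcases eq_or_ne x 0 with h0 | h0
      · rw [h0, anorm_zero]; exact hmax0
      · rcases eq_or_ne (K ω x) 0 with hz | hz
        · exfalso; apply hne; rw [hz, if_neg h0, sub_zero]
        · by_contra hbig
          exact hz ((hω x).2.2 fun hr' => hbig (le_trans hr' (le_max_left r 0)))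
    refine pointwise (gFn p n) (K ω) ρ s hρ0 hρ1 h0s hg_symm hgs hKz ?_ ?_
    · intro u v hgne hBne
      refine hmem u (le_trans (anorm_sub_le u v) ?_)
      have h1 := hg_supp _ hgne
      have h2 := hBn v hBne
      linarith
    · intro u v hgne hBne
      refine hmem v (le_trans (anorm_sub_le v u) ?_)
      have h1 := hg_supp _ hgne
      have h2 := hBn u hBne
      have h3 : anorm (v - u) = anorm (u - v) := by
        rw [show v - u = -(u - v) from by abel, anorm_neg]
      linarith
  rw [integral_congr_ae hae]
  -- integrability
  have hB_int : ∀ v : Fin d → ℤ,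
      Integrable (fun ω => K ω v - (if v = 0 then 1 else 0)) P :=
    fun v => (hKint v).sub (integrable_const _)
  have hBbd : ∀ᵐ ω ∂P, ∀ x : Fin d → ℤ,
      |K ω x - (if x = 0 then 1 else 0)| ≤ max b 0 + 1 := by
    filter_upwards [hKbd'] with ω hω
    intro x
    have h1 := (hω x).1
    have h2 := (hω x).2.1
    have h3 : (0:ℝ) ≤ max b 0 := le_max_right b 0
    by_cases hx : x = 0
    · rw [if_pos hx, abs_le]; constructor <;> nlinarith
    · rw [if_neg hx, sub_zero, abs_of_nonneg h1]; linarith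
  have hBB_int : ∀ u v : Fin d → ℤ, Integrable (fun ω =>
      (K ω u - (if u = 0 then 1 else 0)) * (K ω v - (if v = 0 then 1 else 0))) P := by
    intro u v
    refine Integrable.mono' (integrable_const ((max b 0 + 1) * (max b 0 + 1)))
      ((((hKmeas u).sub measurable_const).mul
        ((hKmeas v).sub measurable_const)).aestronglyMeasurable) ?_
    filter_upwards [hBbd] with ω hω
    rw [Real.norm_eq_abs, abs_mul]
    exact mul_le_mul (hω u) (hω v) (abs_nonneg _) (by positivity)
  have hKS_int : Integrable (fun ω => ∑ x ∈ s, K ω x) P :=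
    integrable_finset_sum s fun x _ => hKint x
  have int1 : ∀ a : (Fin d → ℤ) × (Fin d → ℤ), Integrable (fun ω =>
      (gFn p n (a.1 - a.2) * (K ω a.2 - (if a.2 = 0 then 1 else 0))) *
        ∑' c, ρ (a.1 + c) * ρ c) P :=
    fun a => ((hB_int a.2).const_mul _).mul_const _
  have int2 : ∀ a : (Fin d → ℤ) × (Fin d → ℤ), Integrable (fun ω =>
      (gFn p n (a.1 - a.2) * ((K ω a.1 - (if a.1 = 0 then 1 else 0)) *
        (K ω a.2 - (if a.2 = 0 then 1 else 0)))) * ∑' (c : Fin d → ℤ), ρ c * ρ c) P :=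
    fun a => ((hBB_int a.1 a.2).const_mul _).mul_const _
  have int3 : ∀ w : Fin d → ℤ, Integrable (fun ω =>
      ((2 * ((∑ x ∈ s, K ω x) - 1)) * gFn p n w) * ∑' c, ρ (w + c) * ρ c) P :=
    fun w => (((hKS_int.sub (integrable_const 1)).const_mul 2).mul_const _).mul_const _
  have intA : Integrable (fun ω => ∑ a ∈ s ×ˢ s,
      (gFn p n (a.1 - a.2) * (K ω a.2 - (if a.2 = 0 then 1 else 0))) *
        ∑' c, ρ (a.1 + c) * ρ c) P := integrable_finset_sum _ fun a _ => int1 a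
  have intB : Integrable (fun ω => ∑ a ∈ s ×ˢ s,
      (gFn p n (a.1 - a.2) * ((K ω a.1 - (if a.1 = 0 then 1 else 0)) *
        (K ω a.2 - (if a.2 = 0 then 1 else 0)))) * ∑' (c : Fin d → ℤ), ρ c * ρ c) P :=
    integrable_finset_sum _ fun a _ => int2 a
  have intC : Integrable (fun ω => ∑ w ∈ s,
      ((2 * ((∑ x ∈ s, K ω x) - 1)) * gFn p n w) * ∑' c, ρ (w + c) * ρ c) P :=
    integrable_finset_sum _ fun w _ => int3 w
  -- compute the integral
  have hsplit : ∫ ω, (2 * (∑ a ∈ s ×ˢ s,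
        (gFn p n (a.1 - a.2) * (K ω a.2 - (if a.2 = 0 then 1 else 0))) * ∑' c, ρ (a.1 + c) * ρ c)
      + (∑ a ∈ s ×ˢ s,
          (gFn p n (a.1 - a.2) * ((K ω a.1 - (if a.1 = 0 then 1 else 0)) *
            (K ω a.2 - (if a.2 = 0 then 1 else 0)))) * ∑' (c : Fin d → ℤ), ρ c * ρ c)
      - (∑ w ∈ s, ((2 * ((∑ x ∈ s, K ω x) - 1)) * gFn p n w) * ∑' c, ρ (w + c) * ρ c)) ∂P
      = 2 * (∑ a ∈ s ×ˢ s,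
          (gFn p n (a.1 - a.2) * (k a.2 - (if a.2 = 0 then 1 else 0))) * ∑' c, ρ (a.1 + c) * ρ c)
        + (∑ a ∈ s ×ˢ s,
            (gFn p n (a.1 - a.2) * β a.1 a.2) * ∑' (c : Fin d → ℤ), ρ c * ρ c)
        - (∑ w ∈ s, ((2 * ((∑ x ∈ s, k x) - 1)) * gFn p n w) * ∑' c, ρ (w + c) * ρ c) := by
    have intA2 : Integrable (fun ω => 2 * (∑ a ∈ s ×ˢ s,
      (gFn p n (a.1 - a.2) * (K ω a.2 - (if a.2 = 0 then 1 else 0))) *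
        ∑' c, ρ (a.1 + c) * ρ c)) P := intA.const_mul 2
    have intAB : Integrable (fun ω => 2 * (∑ a ∈ s ×ˢ s,
      (gFn p n (a.1 - a.2) * (K ω a.2 - (if a.2 = 0 then 1 else 0))) *
        ∑' c, ρ (a.1 + c) * ρ c)
        + (∑ a ∈ s ×ˢ s,
      (gFn p n (a.1 - a.2) * ((K ω a.1 - (if a.1 = 0 then 1 else 0)) *
        (K ω a.2 - (if a.2 = 0 then 1 else 0)))) * ∑' (c : Fin d → ℤ), ρ c * ρ c)) P := intA2.add intB
    rw [integral_sub intAB intC,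
      integral_add intA2 intB, integral_const_mul,
      integral_finset_sum _ (fun a _ => int1 a), integral_finset_sum _ (fun a _ => int2 a),
      integral_finset_sum _ (fun w _ => int3 w)]
    congr 1
    congr 1
    · congr 1
      refine Finset.sum_congr rfl fun a _ => ?_
      rw [integral_mul_const, integral_const_mul,
        integral_sub (hKint a.2) (integrable_const _), integral_const, ← hk a.2]
      simp [measure_univ]
    · refine Finset.sum_congr rfl fun a _ => ?_
      rw [integral_mul_const, integral_const_mul, ← hβ a.1 a.2]
    · refine Finset.sum_congr rfl fun w _ => ?_
      rw [integral_mul_const, integral_mul_const, integral_const_mul,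
        integral_sub hKS_int (integrable_const 1),
        integral_finset_sum s (fun x _ => hKint x), integral_const]
      have : ∀ x ∈ s, ∫ ω, K ω x ∂P = k x := fun x _ => (hk x).symm
      rw [Finset.sum_congr rfl this]
      simp [measure_univ]
  rw [hsplit]
  -- β vanishes off s × s
  have hβz : ∀ u v : Fin d → ℤ, (u ∉ s ∨ v ∉ s) → β u v = 0 := by
    intro u v hx
    rw [hβ u v]
    have hz : (fun ω => (K ω u - (if u = 0 then 1 else 0)) * (K ω v - (if v = 0 then 1 else 0)))
        =ᵐ[P] (fun _ => (0:ℝ)) := by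
      filter_upwards [hKbd'] with ω hω
      have hB0 : ∀ x : Fin d → ℤ, x ∉ s → K ω x - (if x = 0 then 1 else 0) = 0 := by
        intro x hxs
        have hK0 : K ω x = 0 := (hω x).2.2 fun hr' => hxs (hrmem x hr')
        have hx0 : x ≠ 0 := fun hcon => hxs (hcon ▸ h0s)
        rw [hK0, if_neg hx0, sub_zero]
      rcases hx with hcase | hcase
      · show (K ω u - _) * _ = 0
        rw [hB0 u hcase, zero_mul]
      · show _ * (K ω v - _) = 0
        rw [hB0 v hcase, mul_zero]
    rw [integral_congr_ae hz, integral_zero]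
  have hβfin : (∑' q : (Fin d → ℤ) × (Fin d → ℤ), gFn p n (q.1 - q.2) * β q.1 q.2)
      = ∑ a ∈ s ×ˢ s, gFn p n (a.1 - a.2) * β a.1 a.2 := by
    refine tsum_eq_sum fun q hq => ?_
    have hor : q.1 ∉ s ∨ q.2 ∉ s := by
      by_contra hcon
      push_neg at hcon
      exact hq (Finset.mem_product.2 ⟨hcon.1, hcon.2⟩)
    rw [hβz q.1 q.2 hor, mul_zero]
  rw [htsumk, hc', hβfin]
  -- khat identity
  have hkhat : ∀ v : Fin d → ℤ, k v + k (-v)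
      = 2 * (((∑ x ∈ s, k x) - k 0) * p v) + (if v = 0 then 2 * k 0 else 0) := by
    intro v
    rcases eq_or_ne v 0 with h0 | h0
    · rw [h0, if_pos rfl, neg_zero, hp 0, if_pos rfl]
      ring
    · rw [hp v, htsumk, if_neg h0, if_neg h0]
      rcases eq_or_ne ((∑ x ∈ s, k x) - k 0) 0 with hz | hz
      · have hzero : ∀ x : Fin d → ℤ, x ≠ 0 → k x = 0 := by
          intro x hx0
          have hsum0 : ∑ y ∈ s.erase 0, k y = 0 := by
            have herase := Finset.sum_erase_add s k h0s
            linarith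
          by_cases hxs : x ∈ s
          · exact (Finset.sum_eq_zero_iff_of_nonneg
              (fun i _ => hk0 i)).1 hsum0 x (Finset.mem_erase.2 ⟨hx0, hxs⟩)
          · exact hks x hxs
        rw [hzero v h0, hzero (-v) (by simpa using h0), hz]
        simp
      · have h2 : (2:ℝ) * ((∑ x ∈ s, k x) - k 0) ≠ 0 := mul_ne_zero two_ne_zero hz
        field_simp
        ring
  have hprod : ∀ f : (Fin d → ℤ) → (Fin d → ℤ) → ℝ,
      (∑ a ∈ s ×ˢ s, f a.1 a.2) = ∑ u ∈ s, ∑ v ∈ s, f u v := fun f => Finset.sum_product' s s f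
  -- symmetrization
  have hTsym : (∑ a ∈ s ×ˢ s, (gFn p n (a.1 - a.2) * k a.2) * (∑' c, ρ (a.1 + c) * ρ c))
      = ∑ a ∈ s ×ˢ s, (gFn p n (a.1 - a.2) * k (-a.2)) * (∑' c, ρ (a.1 + c) * ρ c) := by
    refine Finset.sum_nbij' (fun a => (-a.1, -a.2)) (fun a => (-a.1, -a.2)) ?_ ?_ ?_ ?_ ?_
    · intro a ha; rw [Finset.mem_product] at ha ⊢; exact ⟨neg_mem_ball ha.1, neg_mem_ball ha.2⟩
    · intro a ha; rw [Finset.mem_product] at ha ⊢; exact ⟨neg_mem_ball ha.1, neg_mem_ball ha.2⟩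
    · intro a _; simp
    · intro a _; simp
    · intro a _
      show (gFn p n (a.1 - a.2) * k a.2) * (∑' c, ρ (a.1 + c) * ρ c)
        = (gFn p n (-a.1 - -a.2) * k (-(-a.2))) * (∑' c, ρ (-a.1 + c) * ρ c)
      rw [neg_neg, show -a.1 - -a.2 = -(a.1 - a.2) from by abel, hg_symm, h_symm a.1]
  -- the double-counting identity
  have hite : (∑ a ∈ s ×ˢ s, (gFn p n (a.1 - a.2) * (if a.2 = 0 then 2 * k 0 else 0)) * (∑' c, ρ (a.1 + c) * ρ c))
      = (2 * k 0) * (∑ w ∈ s, gFn p n w * (∑' c, ρ (w + c) * ρ c)) := by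
    refine Eq.trans (hprod fun u v =>
      (gFn p n (u - v) * (if v = 0 then 2 * k 0 else 0)) * (∑' c, ρ (u + c) * ρ c)) ?_
    rw [Finset.mul_sum]
    refine Finset.sum_congr rfl fun u _ => ?_
    rw [Finset.sum_eq_single_of_mem 0 h0s (fun v _ hv0 => by rw [if_neg hv0, mul_zero, zero_mul])]
    rw [if_pos rfl, sub_zero]
    ring
  have hSA2 : (∑ a ∈ s ×ˢ s, (gFn p n (a.1 - a.2) * k a.2) * (∑' c, ρ (a.1 + c) * ρ c))
        + (∑ a ∈ s ×ˢ s, (gFn p n (a.1 - a.2) * k a.2) * (∑' c, ρ (a.1 + c) * ρ c))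
      = (2 * ((∑ x ∈ s, k x) - k 0)) *
          (∑ a ∈ s ×ˢ s, (gFn p n (a.1 - a.2) * p a.2) * (∑' c, ρ (a.1 + c) * ρ c))
        + (2 * k 0) * (∑ w ∈ s, gFn p n w * (∑' c, ρ (w + c) * ρ c)) := by
    nth_rewrite 2 [hTsym]
    rw [← Finset.sum_add_distrib]
    have hterm : ∀ a : (Fin d → ℤ) × (Fin d → ℤ),
        (gFn p n (a.1 - a.2) * k a.2) * (∑' c, ρ (a.1 + c) * ρ c) + (gFn p n (a.1 - a.2) * k (-a.2)) * (∑' c, ρ (a.1 + c) * ρ c)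
        = (2 * ((∑ x ∈ s, k x) - k 0)) * ((gFn p n (a.1 - a.2) * p a.2) * (∑' c, ρ (a.1 + c) * ρ c))
          + (gFn p n (a.1 - a.2) * (if a.2 = 0 then 2 * k 0 else 0)) * (∑' c, ρ (a.1 + c) * ρ c) := by
      intro a
      have hkh := hkhat a.2
      calc (gFn p n (a.1 - a.2) * k a.2) * (∑' c, ρ (a.1 + c) * ρ c) + (gFn p n (a.1 - a.2) * k (-a.2)) * (∑' c, ρ (a.1 + c) * ρ c)
          = (gFn p n (a.1 - a.2) * (k a.2 + k (-a.2))) * (∑' c, ρ (a.1 + c) * ρ c) := by ring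
        _ = (gFn p n (a.1 - a.2) * (2 * (((∑ x ∈ s, k x) - k 0) * p a.2)
              + (if a.2 = 0 then 2 * k 0 else 0))) * (∑' c, ρ (a.1 + c) * ρ c) := by rw [hkh]
        _ = (2 * ((∑ x ∈ s, k x) - k 0)) * ((gFn p n (a.1 - a.2) * p a.2) * (∑' c, ρ (a.1 + c) * ρ c))
          + (gFn p n (a.1 - a.2) * (if a.2 = 0 then 2 * k 0 else 0)) * (∑' c, ρ (a.1 + c) * ρ c) := by ring
    rw [Finset.sum_congr rfl (fun a _ => hterm a), Finset.sum_add_distrib, ← Finset.mul_sum, hite]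
  -- the δ part of X
  have hSD : (∑ a ∈ s ×ˢ s, (gFn p n (a.1 - a.2) * (if a.2 = 0 then (1:ℝ) else 0)) * (∑' c, ρ (a.1 + c) * ρ c))
      = ∑ w ∈ s, gFn p n w * (∑' c, ρ (w + c) * ρ c) := by
    refine Eq.trans (hprod fun u v =>
      (gFn p n (u - v) * (if v = 0 then (1:ℝ) else 0)) * (∑' c, ρ (u + c) * ρ c)) ?_
    refine Finset.sum_congr rfl fun u _ => ?_
    rw [Finset.sum_eq_single_of_mem 0 h0s (fun v _ hv0 => by rw [if_neg hv0, mul_zero, zero_mul])]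
    rw [if_pos rfl, sub_zero, mul_one]
  have hSXsplit : (∑ a ∈ s ×ˢ s,
        (gFn p n (a.1 - a.2) * (k a.2 - (if a.2 = 0 then 1 else 0))) * (∑' c, ρ (a.1 + c) * ρ c))
      = (∑ a ∈ s ×ˢ s, (gFn p n (a.1 - a.2) * k a.2) * (∑' c, ρ (a.1 + c) * ρ c))
        - ∑ a ∈ s ×ˢ s, (gFn p n (a.1 - a.2) * (if a.2 = 0 then (1:ℝ) else 0)) * (∑' c, ρ (a.1 + c) * ρ c) := by
    rw [← Finset.sum_sub_distrib]
    exact Finset.sum_congr rfl fun a _ => by ring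
  -- the convolution inequality
  have hY : (∑ a ∈ s ×ˢ s, (gFn p n (a.1 - a.2) * p a.2) * (∑' c, ρ (a.1 + c) * ρ c))
      = (∑ w ∈ s, gFn p n w * (∑' c, ρ (w + c) * ρ c)) - (∑' (z : Fin d → ℤ), ρ z * ρ z)
        + ∑ w ∈ s, convPow p (n + 1) w * (∑' c, ρ (w + c) * ρ c) := by
    refine Eq.trans (hprod fun u v => (gFn p n (u - v) * p v) * (∑' c, ρ (u + c) * ρ c)) ?_
    have hinner : ∀ u : Fin d → ℤ, (∑ v ∈ s, (gFn p n (u - v) * p v) * (∑' c, ρ (u + c) * ρ c))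
        = (gFn p n u - (if u = 0 then 1 else 0) + convPow p (n+1) u) * (∑' c, ρ (u + c) * ρ c) := by
      intro u
      have h1 : (∑ v ∈ s, gFn p n (u - v) * p v) = ∑' v, gFn p n (u - v) * p v :=
        (tsum_eq_sum (fun v hv => by
          rcases eq_or_ne (p v) 0 with hpz | hpz
          · rw [hpz, mul_zero]
          · exact absurd (hpscl v hpz) hv)).symm
      rw [← Finset.sum_mul, h1, conv_identity hpscl n u]
    rw [Finset.sum_congr rfl (fun u _ => hinner u)]
    have hexp : ∀ u : Fin d → ℤ,
        (gFn p n u - (if u = 0 then 1 else 0) + convPow p (n+1) u) * (∑' c, ρ (u + c) * ρ c)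
        = gFn p n u * (∑' c, ρ (u + c) * ρ c) - (if u = 0 then (1:ℝ) else 0) * (∑' c, ρ (u + c) * ρ c)
          + convPow p (n+1) u * (∑' c, ρ (u + c) * ρ c) := fun u => by ring
    rw [Finset.sum_congr rfl (fun u _ => hexp u), Finset.sum_add_distrib,
      Finset.sum_sub_distrib]
    congr 2
    rw [Finset.sum_eq_single_of_mem 0 h0s (fun v _ hv0 => by rw [if_neg hv0, zero_mul])]
    rw [if_pos rfl, one_mul]
    exact hh0
  have hQ0 : 0 ≤ ∑ w ∈ s, convPow p (n + 1) w * (∑' c, ρ (w + c) * ρ c) :=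
    Finset.sum_nonneg fun w _ => mul_nonneg (convPow_nonneg hp_nonneg (n+1) w) (h_nonneg w)
  have hSB : (∑ a ∈ s ×ˢ s,
        (gFn p n (a.1 - a.2) * β a.1 a.2) * (∑' (c : Fin d → ℤ), ρ c * ρ c))
      = (∑ a ∈ s ×ˢ s, gFn p n (a.1 - a.2) * β a.1 a.2) * (∑' (c : Fin d → ℤ), ρ c * ρ c) := by
    rw [Finset.sum_mul]
  have hSC : (∑ w ∈ s, ((2 * ((∑ x ∈ s, k x) - 1)) * gFn p n w) * (∑' c, ρ (w + c) * ρ c))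
      = (2 * ((∑ x ∈ s, k x) - 1)) * ∑ w ∈ s, gFn p n w * (∑' c, ρ (w + c) * ρ c) := by
    rw [Finset.mul_sum]
    exact Finset.sum_congr rfl fun w _ => by ring
  rw [hSXsplit, hSD, hSB, hSC]
  rw [hY] at hSA2
  nlinarith [hSA2, hQ0, hdk0, mul_nonneg hdk0 hQ0]
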